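/- arXiv:math/0010298 — 8 statements merged into one kernel-verified Lean document; each statement's English description precedes it below -/
import Mathlib

section
/- Let b_1,b_2,b_3,b_4 be nonzero real numbers and x_1,x_2,x_3,x_4 points of ℝ² such that for all i ≠ j one has ‖x_i − x_j‖² = (1/b_i + 1/b_j)² (four pairwise tangent oriented circles with compatible orientations, i.e. an ordered oriented Descartes configuration containing no lines, where b_i is the signed curvature and x_i the center of the i-th circle). Let M be the 4×3 real matrix whose i-th row is (b_i, b_i·x_i(1), b_i·x_i(2)). Then MᵀQ_D·M equals the 3×3 diagonal matrix diag(0,2,2). -/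
open Matrix
set_option maxHeartbeats 1000000

noncomputable def QD : Matrix (Fin 4) (Fin 4) ℝ :=
  Matrix.of fun i j => if i = j then 1/2 else -1/2

lemma norm_sq_eq (v : EuclideanSpace ℝ (Fin 2)) : ‖v‖ ^ 2 = v 0 ^ 2 + v 1 ^ 2 := by
  rw [EuclideanSpace.norm_eq, Real.sq_sqrt (by positivity)]
  simp [Fin.sum_univ_two, sq_abs]

/-- **Extended Descartes Theorem (forward direction, no lines).**
If four oriented circles with nonzero signed curvatures `b i` and centers `x i`
are pairwise tangent with compatible orientations, then the curvature-center
coordinate matrix `M` satisfies `Mᵀ * QD * M = diag(0,2,2)`. -/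
theorem curvature_center_matrix_eq
    (b : Fin 4 → ℝ) (hb : ∀ i, b i ≠ 0)
    (x : Fin 4 → EuclideanSpace ℝ (Fin 2))
    (htangent : ∀ i j, i ≠ j → ‖x i - x j‖ ^ 2 = (1 / b i + 1 / b j) ^ 2)
    (M : Matrix (Fin 4) (Fin 3) ℝ)
    (hM : M = Matrix.of fun i k => ![b i, b i * x i 0, b i * x i 1] k) :
    Mᵀ * QD * M = Matrix.diagonal ![0, 2, 2] := by
  -- expanded tangency
  have htan : ∀ i j, i ≠ j →
      (x i 0 - x j 0) ^ 2 + (x i 1 - x j 1) ^ 2 = (1 / b i + 1 / b j) ^ 2 := by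
    intro i j hij
    have h := htangent i j hij
    rw [norm_sq_eq] at h
    simpa using h
  set bb : Fin 4 → ℝ := fun i => b i * (x i 0 ^ 2 + x i 1 ^ 2) - 1 / b i with hbb
  set W : Matrix (Fin 4) (Fin 4) ℝ :=
    Matrix.of (fun i k => ![bb i, b i, b i * x i 0, b i * x i 1] k) with hW
  set J : Matrix (Fin 4) (Fin 4) ℝ :=
    !![0,-(1/2),0,0; -(1/2),0,0,0; 0,0,1,0; 0,0,0,1] with hJ
  set K : Matrix (Fin 4) (Fin 4) ℝ :=
    !![0,-2,0,0; -2,0,0,0; 0,0,1,0; 0,0,0,1] with hK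
  have hJK : J * K = 1 := by
    ext i j
    fin_cases i <;> fin_cases j <;>
      simp [hJ, hK, Matrix.mul_apply, Fin.sum_univ_four, Matrix.one_apply, Matrix.vecHead, Matrix.vecTail] <;> norm_num
  have hKJ : K * J = 1 := by
    ext i j
    fin_cases i <;> fin_cases j <;>
      simp [hJ, hK, Matrix.mul_apply, Fin.sum_univ_four, Matrix.one_apply, Matrix.vecHead, Matrix.vecTail] <;> norm_num
  have hQQ : QD * QD = 1 := by
    ext i j
    fin_cases i <;> fin_cases j <;>
      simp [QD, Matrix.mul_apply, Fin.sum_univ_four, Matrix.one_apply, Matrix.vecHead, Matrix.vecTail] <;> norm_num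
  -- Gram relation
  have hGram : W * J * Wᵀ = (2 : ℝ) • QD := by
    ext i j
    have : (W * J * Wᵀ) i j =
        -(1/2) * (W i 0 * W j 1) - (1/2) * (W i 1 * W j 0)
        + W i 2 * W j 2 + W i 3 * W j 3 := by
      simp [Matrix.mul_apply, Fin.sum_univ_four, hJ]
      ring
    rw [this]
    by_cases hij : i = j
    · subst hij
      simp only [hW, Matrix.of_apply, QD, Matrix.smul_apply, if_pos rfl]
      simp only [Matrix.cons_val_zero, Matrix.cons_val_one, Matrix.cons_val_two,
        Matrix.cons_val_three, Matrix.head_cons, Matrix.tail_cons, if_true, smul_eq_mul, hbb]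
      field_simp [hbb, hb i]
      ring
    · have ht := htan i j hij
      have hbi := hb i
      have hbj := hb j
      have ht2 : b i ^ 2 * b j ^ 2 * ((x i 0 - x j 0) ^ 2 + (x i 1 - x j 1) ^ 2)
          = (b j + b i) ^ 2 := by
        field_simp at ht
        linear_combination ht
      simp only [hW, Matrix.of_apply, QD, Matrix.smul_apply, if_neg hij, smul_eq_mul,
        Matrix.cons_val_zero, Matrix.cons_val_one, Matrix.head_cons, hbb,
        Matrix.cons_val_two, Matrix.cons_val_three, Matrix.tail_cons,
        Matrix.vecHead, Matrix.vecTail]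
      simp only [Function.comp_apply, Fin.succ_zero_eq_one, Fin.succ_one_eq_two,
        Matrix.cons_val_zero, Matrix.cons_val_one, Matrix.cons_val_two, Matrix.head_cons, Matrix.tail_cons]
      field_simp
      linear_combination (-1 : ℝ) * ht2
  -- invertibility of W
  have hQDdet : IsUnit (QD.det) := Matrix.isUnit_det_of_right_inverse hQQ
  have hdetW : IsUnit W.det := by
    have h1 : W.det * J.det * W.det = ((2 : ℝ) • QD).det := by
      have hh := congrArg Matrix.det hGram
      rw [Matrix.det_mul, Matrix.det_mul, Matrix.det_transpose] at hh
      exact hh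
    rw [isUnit_iff_ne_zero]
    intro h0
    have h2 : ((2 : ℝ) • QD).det ≠ 0 := by
      rw [Matrix.det_smul]
      simp only [Fintype.card_fin]
      exact mul_ne_zero (by norm_num) (isUnit_iff_ne_zero.mp hQDdet)
    apply h2
    rw [← h1, h0]
    ring
  have hWt : IsUnit Wᵀ.det := by rwa [Matrix.det_transpose]
  have e1 : QD * (W * J * Wᵀ) = (2 : ℝ) • (1 : Matrix (Fin 4) (Fin 4) ℝ) := by
    rw [hGram, Matrix.mul_smul, hQQ]
  have e2 : Wᵀ * QD * W * J * Wᵀ = (2 : ℝ) • Wᵀ := by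
    calc Wᵀ * QD * W * J * Wᵀ = Wᵀ * (QD * (W * J * Wᵀ)) := by
          simp only [Matrix.mul_assoc]
      _ = Wᵀ * ((2 : ℝ) • (1 : Matrix (Fin 4) (Fin 4) ℝ)) := by rw [e1]
      _ = (2 : ℝ) • Wᵀ := by simp
  have e3 : Wᵀ * QD * W * J = (2 : ℝ) • (1 : Matrix (Fin 4) (Fin 4) ℝ) := by
    calc Wᵀ * QD * W * J = Wᵀ * QD * W * J * Wᵀ * Wᵀ⁻¹ := by
          rw [Matrix.mul_nonsing_inv_cancel_right _ _ hWt]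
      _ = ((2 : ℝ) • Wᵀ) * Wᵀ⁻¹ := by rw [e2]
      _ = (2 : ℝ) • (1 : Matrix (Fin 4) (Fin 4) ℝ) := by
          rw [Matrix.smul_mul, Matrix.mul_nonsing_inv _ hWt]
  have e4 : Wᵀ * QD * W = (2 : ℝ) • K := by
    have h5 : Wᵀ * QD * W * (J * K) = ((2 : ℝ) • (1 : Matrix (Fin 4) (Fin 4) ℝ)) * K := by
      rw [← Matrix.mul_assoc, e3]
    rw [hJK, Matrix.mul_one] at h5
    rw [h5]
    simp
  -- extract the lower-right 3×3 block
  have hMW : ∀ (i : Fin 4) (k : Fin 3), M i k = W i k.succ := by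
    intro i k
    fin_cases k <;> simp [hM, hW, Matrix.vecHead, Matrix.vecTail]
  ext k l
  have hL : (Mᵀ * QD * M) k l = (Wᵀ * QD * W) k.succ l.succ := by
    simp [Matrix.mul_apply, Matrix.transpose_apply, hMW]
  rw [hL, e4]
  fin_cases k <;> fin_cases l <;>
    simp [hK, Matrix.diagonal, Matrix.vecHead, Matrix.vecTail] <;> norm_num
end

section
/- Let M be a real 4×3 matrix satisfying Mᵀ·Q_D·M = diag(0,2,2), and suppose that every entry M_{i,1} of the first column of M is nonzero. Set b_i := M_{i,1} and x_i := (M_{i,2}/b_i, M_{i,3}/b_i) ∈ ℝ². Then for all i ≠ j one has ‖x_i − x_j‖² = (1/b_i + 1/b_j)²; that is, M is the curvature-center coordinate matrix of an ordered, oriented Descartes configuration of four pairwise compatibly tangent circles. -/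
open Matrix

set_option maxHeartbeats 1000000 in
private lemma descartes_matrix_identity (v b w z : Fin 4 → ℝ) (t : ℝ)
    (hvv : v 0*v 0 + v 1*v 1 + v 2*v 2 + v 3*v 3 - (v 0+v 1+v 2+v 3)*(v 0+v 1+v 2+v 3)/2 = t)
    (hvb : v 0*b 0 + v 1*b 1 + v 2*b 2 + v 3*b 3 - (v 0+v 1+v 2+v 3)*(b 0+b 1+b 2+b 3)/2 = 1)
    (hvw : v 0*w 0 + v 1*w 1 + v 2*w 2 + v 3*w 3 - (v 0+v 1+v 2+v 3)*(w 0+w 1+w 2+w 3)/2 = 0)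
    (hvz : v 0*z 0 + v 1*z 1 + v 2*z 2 + v 3*z 3 - (v 0+v 1+v 2+v 3)*(z 0+z 1+z 2+z 3)/2 = 0)
    (hbb : b 0*b 0 + b 1*b 1 + b 2*b 2 + b 3*b 3 - (b 0+b 1+b 2+b 3)*(b 0+b 1+b 2+b 3)/2 = 0)
    (hbw : b 0*w 0 + b 1*w 1 + b 2*w 2 + b 3*w 3 - (b 0+b 1+b 2+b 3)*(w 0+w 1+w 2+w 3)/2 = 0)
    (hbz : b 0*z 0 + b 1*z 1 + b 2*z 2 + b 3*z 3 - (b 0+b 1+b 2+b 3)*(z 0+z 1+z 2+z 3)/2 = 0)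
    (hww : w 0*w 0 + w 1*w 1 + w 2*w 2 + w 3*w 3 - (w 0+w 1+w 2+w 3)*(w 0+w 1+w 2+w 3)/2 = 2)
    (hwz : w 0*z 0 + w 1*z 1 + w 2*z 2 + w 3*z 3 - (w 0+w 1+w 2+w 3)*(z 0+z 1+z 2+z 3)/2 = 0)
    (hzz : z 0*z 0 + z 1*z 1 + z 2*z 2 + z 3*z 3 - (z 0+z 1+z 2+z 3)*(z 0+z 1+z 2+z 3)/2 = 2) :
    ∀ i j, QD i j = v i * b j + b i * v j - t * (b i * b j) + (w i * w j + z i * z j)/2 := by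
  have hQD2 : QD * QD = 1 := by
    ext i j
    fin_cases i <;> fin_cases j <;>
      simp [QD, Matrix.mul_apply, Fin.sum_univ_four, Matrix.one_apply] <;> norm_num
  have hWB : (Matrix.of fun i => ![v i, b i, w i, z i])ᵀ * QD *
      (Matrix.of fun i => ![v i, b i, w i, z i]) = !![t,1,0,0; 1,0,0,0; 0,0,2,0; 0,0,0,2] := by
    ext i j
    fin_cases i <;> fin_cases j <;>
      simp [QD, Matrix.mul_apply, Fin.sum_univ_four, Matrix.vecHead, Matrix.vecTail]
    · linear_combination hvv
    · linear_combination hvb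
    · linear_combination hvw
    · linear_combination hvz
    · linear_combination hvb
    · linear_combination hbb
    · linear_combination hbw
    · linear_combination hbz
    · linear_combination hvw
    · linear_combination hbw
    · linear_combination hww
    · linear_combination hwz
    · linear_combination hvz
    · linear_combination hbz
    · linear_combination hwz
    · linear_combination hzz
  have hBiB : (!![0,1,0,0; 1,-t,0,0; 0,0,1/2,0; 0,0,0,1/2] : Matrix (Fin 4) (Fin 4) ℝ) *
      !![t,1,0,0; 1,0,0,0; 0,0,2,0; 0,0,0,2] = 1 := by
    ext i j
    fin_cases i <;> fin_cases j <;>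
      simp [Matrix.mul_apply, Fin.sum_univ_four, Matrix.one_apply,
        Matrix.vecHead, Matrix.vecTail]
  set W : Matrix (Fin 4) (Fin 4) ℝ := Matrix.of fun i => ![v i, b i, w i, z i] with hW
  set Bi : Matrix (Fin 4) (Fin 4) ℝ := !![0,1,0,0; 1,-t,0,0; 0,0,1/2,0; 0,0,0,1/2] with hBi
  have h1 : (Bi * Wᵀ * QD) * W = 1 := by
    rw [Matrix.mul_assoc, Matrix.mul_assoc, ← Matrix.mul_assoc Wᵀ QD W, hWB, hBiB]
  have h2 : W * (Bi * Wᵀ * QD) = 1 := mul_eq_one_comm.mp h1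
  have h4 : W * (Bi * Wᵀ) = QD := by
    have h5 := congrArg (· * QD) h2
    simpa [Matrix.mul_assoc, hQD2, Matrix.mul_one, Matrix.one_mul] using h5
  intro i j
  have h6 : (W * (Bi * Wᵀ)) i j = QD i j := by rw [h4]
  simp [hW, hBi, Matrix.mul_apply, Matrix.vecMul, dotProduct, Matrix.transpose_apply,
    Fin.sum_univ_four, Matrix.vecHead, Matrix.vecTail] at h6
  linear_combination -h6

set_option maxHeartbeats 2000000 in
private lemma descartes_key (b w z : Fin 4 → ℝ)
    (h00 : b 0 * b 0 + b 1 * b 1 + b 2 * b 2 + b 3 * b 3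
        = (b 0 + b 1 + b 2 + b 3) ^ 2 / 2)
    (h01 : b 0 * w 0 + b 1 * w 1 + b 2 * w 2 + b 3 * w 3
        = (b 0 + b 1 + b 2 + b 3) * (w 0 + w 1 + w 2 + w 3) / 2)
    (h02 : b 0 * z 0 + b 1 * z 1 + b 2 * z 2 + b 3 * z 3
        = (b 0 + b 1 + b 2 + b 3) * (z 0 + z 1 + z 2 + z 3) / 2)
    (h11 : w 0 * w 0 + w 1 * w 1 + w 2 * w 2 + w 3 * w 3
        = (w 0 + w 1 + w 2 + w 3) ^ 2 / 2 + 2)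
    (h12 : w 0 * z 0 + w 1 * z 1 + w 2 * z 2 + w 3 * z 3
        = (w 0 + w 1 + w 2 + w 3) * (z 0 + z 1 + z 2 + z 3) / 2)
    (h22 : z 0 * z 0 + z 1 * z 1 + z 2 * z 2 + z 3 * z 3
        = (z 0 + z 1 + z 2 + z 3) ^ 2 / 2 + 2)
    (hb : ∀ i, b i ≠ 0) :
    ∀ i j, i ≠ j →
      (w i / b i - w j / b j) ^ 2 + (z i / b i - z j / b j) ^ 2
        = (1 / b i + 1 / b j) ^ 2 := by
  obtain ⟨s, hsd⟩ : ∃ s : ℝ, s = b 0 + b 1 + b 2 + b 3 := ⟨_, rfl⟩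
  obtain ⟨p, hpd⟩ : ∃ p : ℝ, p = w 0 + w 1 + w 2 + w 3 := ⟨_, rfl⟩
  obtain ⟨q, hqd⟩ : ∃ q : ℝ, q = z 0 + z 1 + z 2 + z 3 := ⟨_, rfl⟩
  rw [← hsd] at h00 h01 h02
  rw [← hpd] at h01 h11 h12
  rw [← hqd] at h02 h12 h22
  have hs : s ≠ 0 := by
    intro h
    rw [h] at h00
    apply hb 0
    nlinarith [sq_nonneg (b 1), sq_nonneg (b 2), sq_nonneg (b 3), sq_nonneg (b 0)]
  have hentry := descartes_matrix_identity
    (fun i => -(1 + p / 2 * w i + q / 2 * z i) / s) b w z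
    (((-(1 + p / 2 * w 0 + q / 2 * z 0) / s) ^ 2
      + (-(1 + p / 2 * w 1 + q / 2 * z 1) / s) ^ 2
      + (-(1 + p / 2 * w 2 + q / 2 * z 2) / s) ^ 2
      + (-(1 + p / 2 * w 3 + q / 2 * z 3) / s) ^ 2)
      - ((-(1 + p / 2 * w 0 + q / 2 * z 0) / s)
        + (-(1 + p / 2 * w 1 + q / 2 * z 1) / s)
        + (-(1 + p / 2 * w 2 + q / 2 * z 2) / s)
        + (-(1 + p / 2 * w 3 + q / 2 * z 3) / s)) ^ 2 / 2)
    (by ring)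
    (by rw [← hsd]; field_simp; linear_combination (-2*p) * h01 + (-2*q) * h02 + 4 * hsd + (-s*p) * hpd + (-s*q) * hqd)
    (by rw [← hpd]; field_simp; linear_combination (-2*p) * h11 + (-2*q) * h12 + (4 - p^2) * hpd + (-p*q) * hqd)
    (by rw [← hqd]; field_simp; linear_combination (-2*p) * h12 + (-2*q) * h22 + (4 - q^2) * hqd + (-p*q) * hpd)
    (by rw [← hsd]; linear_combination h00)
    (by rw [← hsd, ← hpd]; linear_combination h01)
    (by rw [← hsd, ← hqd]; linear_combination h02)
    (by rw [← hpd]; linear_combination h11)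
    (by rw [← hpd, ← hqd]; linear_combination h12)
    (by rw [← hqd]; linear_combination h22)
  intro i j hij
  have dii := hentry i i
  have djj := hentry j j
  have dij := hentry i j
  simp only [QD, Matrix.of_apply, if_neg hij] at dij
  rw [show (QD i i : ℝ) = 1/2 by simp [QD]] at dii
  rw [show (QD j j : ℝ) = 1/2 by simp [QD]] at djj
  have hbi := hb i
  have hbj := hb j
  have key : (w i * b j - w j * b i)^2 + (z i * b j - z j * b i)^2 = (b i + b j)^2 := by
    linear_combination (-2*(b j)^2) * dii + (-2*(b i)^2) * djj + (4*(b i)*(b j)) * dij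
  field_simp
  linear_combination key

/-- **Extended Descartes Theorem (converse direction).**
If a real `4 × 3` matrix `M` satisfies `Mᵀ * QD * M = diag(0,2,2)` and every entry
of its first column is nonzero, then, setting `b i := M i 0` and
`x i := (M i 1 / b i, M i 2 / b i)`, the four oriented circles with curvature `b i`
and center `x i` are pairwise tangent with compatible orientations:
`‖x i - x j‖² = (1 / b i + 1 / b j)²` for all `i ≠ j`. -/
theorem descartes_configuration_of_curvature_center_matrix
    (M : Matrix (Fin 4) (Fin 3) ℝ)
    (hM : Mᵀ * QD * M = Matrix.diagonal ![0, 2, 2])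
    (hcol : ∀ i, M i 0 ≠ 0) :
    ∀ i j, i ≠ j →
      (M i 1 / M i 0 - M j 1 / M j 0) ^ 2 + (M i 2 / M i 0 - M j 2 / M j 0) ^ 2
        = (1 / M i 0 + 1 / M j 0) ^ 2 := by
  have e00 := congrFun (congrFun hM 0) 0
  have e01 := congrFun (congrFun hM 0) 1
  have e02 := congrFun (congrFun hM 0) 2
  have e11 := congrFun (congrFun hM 1) 1
  have e12 := congrFun (congrFun hM 1) 2
  have e22 := congrFun (congrFun hM 2) 2
  simp [Matrix.mul_apply, QD, Fin.sum_univ_four, Matrix.diagonal] at e00 e01 e02 e11 e12 e22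
  exact descartes_key (fun i => M i 0) (fun i => M i 1) (fun i => M i 2)
    (by linear_combination e00) (by linear_combination e01) (by linear_combination e02)
    (by linear_combination e11) (by linear_combination e12) (by linear_combination e22)
    hcol
end

section
/- Let b_1,b_2,b_3,b_4 be nonzero real numbers and x_1,x_2,x_3,x_4 points of ℝ² such that for all i ≠ j one has ‖x_i − x_j‖² = (1/b_i + 1/b_j)² (an ordered oriented Descartes configuration with no lines). Let W be the 4×4 real matrix whose i-th row is the augmented curvature-center coordinate vector w(b_i, x_i) = (b_i‖x_i‖² − 1/b_i, b_i, b_i·x_i(1), b_i·x_i(2)). Then Wᵀ·Q_D·W = Q_W. -/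
open Matrix

/-- The matrix of the Wilker quadratic form. -/
noncomputable def QW : Matrix (Fin 4) (Fin 4) ℝ :=
  !![0, -4, 0, 0; -4, 0, 0, 0; 0, 0, 2, 0; 0, 0, 0, 2]

/-- The inverse of the Wilker matrix. -/
noncomputable def Nmat : Matrix (Fin 4) (Fin 4) ℝ :=
  !![0, -1/4, 0, 0; -1/4, 0, 0, 0; 0, 0, 1/2, 0; 0, 0, 0, 1/2]

lemma QW_mul_Nmat : QW * Nmat = 1 := by
  ext i j
  fin_cases i <;> fin_cases j <;>
    simp [QW, Nmat, Matrix.mul_apply, Fin.sum_univ_four, Matrix.one_apply,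
      Matrix.vecHead, Matrix.vecTail] <;> norm_num

lemma QD_mul_QD : QD * QD = 1 := by
  ext i j
  fin_cases i <;> fin_cases j <;>
    simp [QD, Matrix.mul_apply, Fin.sum_univ_four, Matrix.one_apply,
      Matrix.vecHead, Matrix.vecTail] <;> norm_num

lemma WNWt_eq_QD (b : Fin 4 → ℝ) (hb : ∀ i, b i ≠ 0)
    (x : Fin 4 → EuclideanSpace ℝ (Fin 2))
    (htangent : ∀ i j, i ≠ j → ‖x i - x j‖ ^ 2 = (1 / b i + 1 / b j) ^ 2)
    (W : Matrix (Fin 4) (Fin 4) ℝ)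
    (hW : W = Matrix.of fun i k =>
      ![b i * ‖x i‖ ^ 2 - 1 / b i, b i, b i * x i 0, b i * x i 1] k) :
    W * Nmat * Wᵀ = QD := by
  have hn : ∀ i : Fin 4, ‖x i‖ ^ 2 = x i 0 ^ 2 + x i 1 ^ 2 := fun i => by
    rw [EuclideanSpace.norm_eq, Real.sq_sqrt (by positivity)]
    simp [Fin.sum_univ_two, sq]
  ext i j
  simp only [Matrix.mul_apply, Matrix.transpose_apply, Fin.sum_univ_four, hW, QD,
    Matrix.of_apply, Nmat]
  simp only [Matrix.cons_val', Matrix.cons_val_zero, Matrix.cons_val_one, Matrix.head_cons,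
    Matrix.empty_val', Matrix.cons_val_fin_one, Matrix.head_fin_const,
    Matrix.cons_val_two, Matrix.tail_cons, Matrix.cons_val_three]
  rcases eq_or_ne i j with h | h
  · subst h
    rw [if_pos rfl, hn i]
    have hbi : b i * (b i)⁻¹ = 1 := mul_inv_cancel₀ (hb i)
    linear_combination ((1:ℝ)/2) * hbi
  · rw [if_neg h]
    have ht := htangent i j h
    have hnd : ‖x i - x j‖ ^ 2 = (x i 0 - x j 0) ^ 2 + (x i 1 - x j 1) ^ 2 := by
      rw [EuclideanSpace.norm_eq, Real.sq_sqrt (by positivity)]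
      simp [Fin.sum_univ_two, sq]
    rw [hnd] at ht
    rw [hn i, hn j]
    have hbi : b i * (b i)⁻¹ = 1 := mul_inv_cancel₀ (hb i)
    have hbj : b j * (b j)⁻¹ = 1 := mul_inv_cancel₀ (hb j)
    linear_combination (-(b i * b j)/4) * ht + (-(b j * (b i)⁻¹)/4 - (b j * (b j)⁻¹)/2) * hbi +
      (-(1:ℝ)/2 - (b i * (b j)⁻¹)/4) * hbj

/-- **Augmented Euclidean Descartes Theorem (forward direction, no lines).**
If four oriented circles with nonzero signed curvatures `b i` and centers `x i`
are pairwise tangent with compatible orientations, then the augmented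
curvature-center coordinate matrix `W`, whose `i`-th row is
`(b i * ‖x i‖² - 1 / b i, b i, b i * x i 0, b i * x i 1)`,
satisfies `Wᵀ * QD * W = QW`. -/
theorem augmented_curvature_center_matrix_eq
    (b : Fin 4 → ℝ) (hb : ∀ i, b i ≠ 0)
    (x : Fin 4 → EuclideanSpace ℝ (Fin 2))
    (htangent : ∀ i j, i ≠ j → ‖x i - x j‖ ^ 2 = (1 / b i + 1 / b j) ^ 2)
    (W : Matrix (Fin 4) (Fin 4) ℝ)
    (hW : W = Matrix.of fun i k =>
      ![b i * ‖x i‖ ^ 2 - 1 / b i, b i, b i * x i 0, b i * x i 1] k) :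
    Wᵀ * QD * W = QW := by
  have h1 := WNWt_eq_QD b hb x htangent W hW
  have h4 : W * (Nmat * Wᵀ * QD) = 1 := by
    rw [← Matrix.mul_assoc, ← Matrix.mul_assoc, h1, QD_mul_QD]
  have h5 : (Nmat * Wᵀ * QD) * W = 1 := mul_eq_one_comm.mp h4
  calc Wᵀ * QD * W = (QW * Nmat) * (Wᵀ * QD * W) := by rw [QW_mul_Nmat, one_mul]
    _ = QW * ((Nmat * Wᵀ * QD) * W) := by simp only [Matrix.mul_assoc]
    _ = QW := by rw [h5, Matrix.mul_one]
end

section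
/- Let W be a real 4×4 matrix satisfying Wᵀ·Q_D·W = Q_W, and suppose every entry W_{i,2} of its second column is nonzero. Set b_i := W_{i,2} and x_i := (W_{i,3}/b_i, W_{i,4}/b_i) ∈ ℝ². Then: (a) W_{i,1} = b_i‖x_i‖² − 1/b_i for each i, and (b) for all i ≠ j, ‖x_i − x_j‖² = (1/b_i + 1/b_j)². That is, W is the augmented curvature-center coordinate matrix of an ordered, oriented Descartes configuration of four pairwise compatibly tangent circles. -/
open Matrix

/-- Inverse of the Wilker form matrix. -/
noncomputable def QWi : Matrix (Fin 4) (Fin 4) ℝ :=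
  !![0, -1/4, 0, 0; -1/4, 0, 0, 0; 0, 0, 1/2, 0; 0, 0, 0, 1/2]

lemma QWi_mul_QW : QWi * QW = 1 := by
  ext i j
  fin_cases i <;> fin_cases j <;>
    simp [Matrix.mul_apply, Fin.sum_univ_four, QW, QWi, Matrix.one_apply,
      Matrix.vecHead, Matrix.vecTail]

/-- **Augmented Euclidean Descartes Theorem (converse direction, no lines).**
If a real `4 × 4` matrix `W` satisfies `Wᵀ * QD * W = QW` and every entry of its
second column is nonzero, then, setting `b i := W i 1` and
`x i := (W i 2 / b i, W i 3 / b i)`: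
(a) the first column records `b i * ‖x i‖² - 1 / b i`; and
(b) the four oriented circles with curvature `b i` and center `x i` are pairwise
tangent with compatible orientations. -/
theorem descartes_configuration_of_augmented_matrix
    (W : Matrix (Fin 4) (Fin 4) ℝ)
    (hW : Wᵀ * QD * W = QW)
    (hcol : ∀ i, W i 1 ≠ 0) :
    (∀ i, W i 0 = W i 1 * ((W i 2 / W i 1) ^ 2 + (W i 3 / W i 1) ^ 2) - 1 / W i 1) ∧
    (∀ i j, i ≠ j →
      (W i 2 / W i 1 - W j 2 / W j 1) ^ 2 + (W i 3 / W i 1 - W j 3 / W j 1) ^ 2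
        = (1 / W i 1 + 1 / W j 1) ^ 2) := by
  have hleft : (QWi * Wᵀ * QD) * W = 1 := by
    calc (QWi * Wᵀ * QD) * W = QWi * (Wᵀ * QD * W) := by
          simp [Matrix.mul_assoc]
      _ = 1 := by rw [hW, QWi_mul_QW]
  have hright : W * (QWi * Wᵀ * QD) = 1 := mul_eq_one_comm.mp hleft
  have hrow : W * QWi * Wᵀ = QD := by
    have h1 : W * QWi * Wᵀ * QD * QD = QD := by
      rw [show W * QWi * Wᵀ * QD = W * (QWi * Wᵀ * QD) by simp [Matrix.mul_assoc],
        hright, Matrix.one_mul]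
    rwa [Matrix.mul_assoc, QD_mul_QD, Matrix.mul_one] at h1
  have key : ∀ i j, -(1/4) * (W i 0 * W j 1 + W i 1 * W j 0)
      + (1/2) * (W i 2 * W j 2 + W i 3 * W j 3)
      = if i = j then (1:ℝ)/2 else -1/2 := by
    intro i j
    have := congrFun (congrFun hrow i) j
    simp only [Matrix.mul_apply, Matrix.transpose_apply, Fin.sum_univ_four, QWi, QD,
      Matrix.of_apply, Matrix.cons_val', Matrix.cons_val_zero, Matrix.cons_val_one,
      Matrix.head_cons, Matrix.empty_val', Matrix.cons_val_fin_one, Matrix.head_fin_const,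
      Matrix.cons_val_two, Matrix.cons_val_three, Matrix.tail_cons] at this ⊢
    linarith [this]
  constructor
  · intro i
    have h := key i i
    norm_num at h
    have hbi := hcol i
    field_simp
    linear_combination (-2) * h
  · intro i j hij
    have hii := key i i
    have hjj := key j j
    have hijk := key i j
    norm_num at hii hjj
    rw [if_neg hij] at hijk
    have hbi := hcol i
    have hbj := hcol j
    field_simp
    linear_combination (2 * (W j 1)^2) * hii + (2 * (W i 1)^2) * hjj
      - (4 * W i 1 * W j 1) * hijk
end

section
/- Let W be a real 4×4 matrix satisfying Wᵀ·Q_D·W = Q_W. Then the sum of the entries of the second column of W is nonzero: W_{1,2} + W_{2,2} + W_{3,2} + W_{4,2} ≠ 0. (The sum of the signed curvatures of the circles of an oriented Descartes configuration cannot be zero.) -/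
open Matrix

/-- The sum of the signed curvatures of the circles of an oriented Descartes
configuration cannot be zero: for any real `4 × 4` matrix `W` with
`Wᵀ * QD * W = QW`, the sum of the entries of the second column of `W`
(the curvatures) is nonzero. -/
theorem curvature_sum_ne_zero
    (W : Matrix (Fin 4) (Fin 4) ℝ)
    (hW : Wᵀ * QD * W = QW) :
    W 0 1 + W 1 1 + W 2 1 + W 3 1 ≠ 0 := by
  intro hs
  have h11 := congrFun (congrFun hW 1) 1
  have h01 := congrFun (congrFun hW 0) 1
  simp [Matrix.mul_apply, QD, QW, Fin.sum_univ_four, Matrix.transpose_apply,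
    Fin.ext_iff, show ((3:Fin 4):ℕ) = 3 from rfl] at h11 h01
  norm_num at h11 h01
  have ha : W 0 1 = 0 := by nlinarith [sq_nonneg (W 0 1), sq_nonneg (W 1 1), sq_nonneg (W 2 1), sq_nonneg (W 3 1)]
  have hb : W 1 1 = 0 := by nlinarith [sq_nonneg (W 0 1), sq_nonneg (W 1 1), sq_nonneg (W 2 1), sq_nonneg (W 3 1)]
  have hc : W 2 1 = 0 := by nlinarith [sq_nonneg (W 0 1), sq_nonneg (W 1 1), sq_nonneg (W 2 1), sq_nonneg (W 3 1)]
  have hd : W 3 1 = 0 := by nlinarith [sq_nonneg (W 0 1), sq_nonneg (W 1 1), sq_nonneg (W 2 1), sq_nonneg (W 3 1)]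
  rw [ha, hb, hc, hd] at h01
  simp only [mul_zero, zero_mul, add_zero, zero_add, neg_zero] at h01
  exact absurd h01 (by norm_num)
end

section
/- Let W and W' be real 4×4 matrices satisfying Wᵀ·Q_D·W = Q_W and W'ᵀ·Q_D·W' = Q_W. Then there exists a unique real 4×4 matrix U such that Uᵀ·Q_D·U = Q_D and U·W = W'. (The group Aut(Q_D) acts simply transitively on the left on the space of augmented curvature-center coordinate matrices of ordered, oriented Descartes configurations.) -/
open Matrix

/-- `Aut(Q_D)` acts simply transitively on the left on the space of augmented
curvature-center coordinate matrices of ordered, oriented Descartes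
configurations: given `W`, `W'` with `Wᵀ·Q_D·W = Q_W` and `W'ᵀ·Q_D·W' = Q_W`,
there is a unique `U` with `Uᵀ·Q_D·U = Q_D` and `U·W = W'`. -/
theorem autQD_simply_transitive
    (W W' : Matrix (Fin 4) (Fin 4) ℝ)
    (hW : Wᵀ * QD * W = QW) (hW' : W'ᵀ * QD * W' = QW) :
    ∃! U : Matrix (Fin 4) (Fin 4) ℝ, Uᵀ * QD * U = QD ∧ U * W = W' := by
  have hQW : QW.det = -64 := by
    rw [QW]; simp [Matrix.det_succ_row_zero, Fin.sum_univ_succ, show (Fin.succAbove 1 2 : Fin 4) = 3 from rfl]; norm_num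
  have hdet : W.det ≠ 0 := by
    intro h
    have := congrArg Matrix.det hW
    rw [Matrix.det_mul, Matrix.det_mul, h, hQW] at this
    norm_num at this
  have hunit : IsUnit W.det := isUnit_iff_ne_zero.mpr hdet
  have hinv : W⁻¹ * W = 1 := Matrix.nonsing_inv_mul W hunit
  have hinv' : W * W⁻¹ = 1 := Matrix.mul_nonsing_inv W hunit
  refine ⟨W' * W⁻¹, ⟨?_, ?_⟩, ?_⟩
  · have : (W' * W⁻¹)ᵀ * QD * (W' * W⁻¹) = Wᵀ⁻¹ * (W'ᵀ * QD * W') * W⁻¹ := by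
      rw [Matrix.transpose_mul, Matrix.transpose_nonsing_inv]
      noncomm_ring
    rw [this, hW', ← hW]
    have hT : Wᵀ⁻¹ * Wᵀ = 1 := by
      rw [← Matrix.transpose_nonsing_inv, ← Matrix.transpose_mul, hinv',
        Matrix.transpose_one]
    calc Wᵀ⁻¹ * (Wᵀ * QD * W) * W⁻¹ = (Wᵀ⁻¹ * Wᵀ) * QD * (W * W⁻¹) := by
          noncomm_ring
      _ = QD := by rw [hT, hinv', Matrix.one_mul, Matrix.mul_one]
  · rw [Matrix.mul_assoc, hinv, Matrix.mul_one]
  · rintro V ⟨-, hVW⟩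
    calc V = V * (W * W⁻¹) := by rw [hinv', Matrix.mul_one]
      _ = W' * W⁻¹ := by rw [← Matrix.mul_assoc, hVW]
end

section
/- Let W and W' be real 4×4 matrices satisfying Wᵀ·Q_D·W = Q_W and W'ᵀ·Q_D·W' = Q_W. Then there exists a unique real 4×4 matrix V such that Vᵀ·Q_W·V = Q_W and W'·V = W (equivalently, W' = W·V⁻¹). (The group Aut(Q_W) acts simply transitively on the right on the space of augmented curvature-center coordinate matrices of ordered, oriented Descartes configurations.) -/
open Matrix

lemma QW_det : QW.det = -64 := by
  rw [Matrix.det_succ_row_zero]; simp [QW, Fin.sum_univ_succ, Matrix.det_fin_three]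
  rw [show (Fin.succAbove 1 2 : Fin 4) = 3 from rfl]; simp [Matrix.cons_val]; norm_num

/-- `Aut(Q_W)` acts simply transitively on the right on the space of augmented
curvature-center coordinate matrices of ordered, oriented Descartes
configurations: given `W`, `W'` with `Wᵀ·Q_D·W = Q_W` and `W'ᵀ·Q_D·W' = Q_W`,
there is a unique `V` with `Vᵀ·Q_W·V = Q_W` and `W'·V = W`. -/
theorem autQW_simply_transitive
    (W W' : Matrix (Fin 4) (Fin 4) ℝ)
    (hW : Wᵀ * QD * W = QW) (hW' : W'ᵀ * QD * W' = QW) :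
    ∃! V : Matrix (Fin 4) (Fin 4) ℝ, Vᵀ * QW * V = QW ∧ W' * V = W := by
  have hdet' : W'.det ≠ 0 := by
    intro h
    have := congrArg Matrix.det hW'
    rw [Matrix.det_mul, Matrix.det_mul, Matrix.det_transpose, h, QW_det] at this
    norm_num at this
  have hu : IsUnit W'.det := isUnit_iff_ne_zero.mpr hdet'
  have hinv : W'⁻¹ * W' = 1 := Matrix.nonsing_inv_mul _ hu
  have hinv' : W' * W'⁻¹ = 1 := Matrix.mul_nonsing_inv _ hu
  have hQD : (W'⁻¹)ᵀ * QW * W'⁻¹ = QD := by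
    rw [← hW']
    calc (W'⁻¹)ᵀ * (W'ᵀ * QD * W') * W'⁻¹
        = (W'⁻¹)ᵀ * W'ᵀ * QD * (W' * W'⁻¹) := by simp only [mul_assoc]
      _ = (W' * W'⁻¹)ᵀ * QD * (W' * W'⁻¹) := by rw [Matrix.transpose_mul]
      _ = QD := by rw [hinv']; simp
  refine ⟨W'⁻¹ * W, ⟨?_, ?_⟩, ?_⟩
  · calc (W'⁻¹ * W)ᵀ * QW * (W'⁻¹ * W)
        = Wᵀ * ((W'⁻¹)ᵀ * QW * W'⁻¹) * W := by rw [Matrix.transpose_mul]; simp only [mul_assoc]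
      _ = QW := by rw [hQD, hW]
  · rw [← mul_assoc, hinv', one_mul]
  · rintro V ⟨-, hV⟩
    calc V = W'⁻¹ * (W' * V) := by rw [← mul_assoc, hinv, one_mul]
      _ = W'⁻¹ * W := by rw [hV]
end

section
/- Let D := (1/2)·[[−1,1,1,1],[1,−1,1,1],[1,1,−1,1],[1,1,1,−1]] (the duality operator). Then: (a) D = −Q_D; (b) D is symmetric and D² = I, so D = Dᵀ = D⁻¹; (c) Dᵀ·Q_D·D = Q_D, i.e. D ∈ Aut(Q_D); and (d) Dᵀ·S_i·D = S_iᵀ for each i ∈ {1,2,3,4}. Consequently the dual Apollonian group ⟨S_1ᵀ,S_2ᵀ,S_3ᵀ,S_4ᵀ⟩ is conjugate in Aut(Q_D) to the Apollonian group ⟨S_1,S_2,S_3,S_4⟩ via D. -/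
open Matrix

/-- The Apollonian generators `S₁, S₂, S₃, S₄`. -/
noncomputable def S : Fin 4 → Matrix (Fin 4) (Fin 4) ℝ := fun i =>
  Matrix.of fun j k =>
    if j = i then (if k = i then -1 else 2) else (if j = k then 1 else 0)

/-- The duality operator `D`. -/
noncomputable def Dop : Matrix (Fin 4) (Fin 4) ℝ :=
  (1/2 : ℝ) • !![-1, 1, 1, 1; 1, -1, 1, 1; 1, 1, -1, 1; 1, 1, 1, -1]

lemma Dop_apply (i j : Fin 4) : Dop i j = if i = j then -(1/2) else 1/2 := by
  fin_cases i <;> fin_cases j <;>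
    norm_num [Dop, Matrix.smul_apply, Matrix.cons_val', Matrix.cons_val_zero,
      Matrix.cons_val_one, Matrix.head_cons, Matrix.empty_val',
      Matrix.cons_val_fin_one, Matrix.vecHead, Matrix.vecTail, Fin.ext_iff]

set_option maxHeartbeats 1000000 in
/-- The duality operator `D = -Q_D` is a symmetric involution in `Aut(Q_D)`
conjugating each Apollonian generator `S i` to the dual generator `S iᵀ`;
hence the dual Apollonian group is conjugate to the Apollonian group in
`Aut(Q_D)` via `D`. -/
theorem duality_operator_conjugates :
    Dop = -QD ∧
    (Dopᵀ = Dop ∧ Dop * Dop = 1) ∧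
    Dopᵀ * QD * Dop = QD ∧
    (∀ i : Fin 4, Dopᵀ * S i * Dop = (S i)ᵀ) := by
  refine ⟨?_, ⟨?_, ?_⟩, ?_, ?_⟩
  · ext i j
    simp only [Dop_apply, QD, Matrix.neg_apply, Matrix.of_apply]
    split <;> norm_num
  · ext i j
    simp only [Matrix.transpose_apply, Dop_apply, eq_comm]
  · ext i j
    simp only [Matrix.mul_apply, Fin.sum_univ_four, Dop_apply, Matrix.one_apply]
    fin_cases i <;> fin_cases j <;> simp +decide <;> norm_num
  · ext i j
    simp only [Matrix.mul_apply, Fin.sum_univ_four, Dop_apply, Matrix.transpose_apply,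
      QD, Matrix.of_apply]
    fin_cases i <;> fin_cases j <;> simp +decide <;> norm_num
  · intro i
    ext j k
    simp only [Matrix.mul_apply, Fin.sum_univ_four, Dop_apply, Matrix.transpose_apply,
      S, Matrix.of_apply]
    fin_cases i <;> fin_cases j <;> fin_cases k <;> simp +decide <;> norm_num
end
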